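/- Let γ_t ∈ (0, 1), ε > 0, and j′ ≥ 1 be given. Let {t_j} be a sequence of positive reals with t_{j+1} ≤ γ_t·t_j for all j ≥ j′ − 1, and such that t_j = t_{j−1}^{1+ε} and Y_{j+1} = t_{j−1}^{−ε} for all j ≥ j′. Let {k_j}_{j≥j′} be a strictly increasing sequence of nonnegative integers, and let {y_k} ⊂ ℝ^m and {c_k} ⊂ ℝ^m be sequences such that for every j ≥ j′: y_k = y_{k_j} for all k with k_j ≤ k < k_{j+1}, ‖y_{k_j}‖₂ ≤ Y_{j+1}, and ‖c_{k_j}‖₂ ≤ t_j. Then for every integer q ≥ 0, Σ_{k = k_{j′}}^{k_{j′+q+1} − 1} y_kᵀ(c_{k+1} − c_k) ≤ 2·t_{j′−1} / (1 − γ_t). -/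

import Mathlib

/-- Partial-sum bound for the multiplier–constraint inner products: under the target update
rules `t_j = t_{j−1}^{1+ε}`, `Y_{j+1} = t_{j−1}^{−ε}`, geometric decrease `t_{j+1} ≤ γ_t t_j`,
block-constant multipliers `y` bounded by `Y_{j+1}`, and feasibility targets `‖c_{k_j}‖ ≤ t_j`,
one has `Σ_{k=k_{j'}}^{k_{j'+q+1}−1} y_kᵀ(c_{k+1} − c_k) ≤ 2 t_{j'−1}/(1 − γ_t)`. -/
theorem stmt8 {m : ℕ} (γt ε : ℝ) (hγt : γt ∈ Set.Ioo (0 : ℝ) 1) (hε : 0 < ε)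
    (j' : ℕ) (hj' : 1 ≤ j')
    (t Y : ℕ → ℝ) (ht_pos : ∀ j, 0 < t j)
    (ht_dec : ∀ j, j' - 1 ≤ j → t (j + 1) ≤ γt * t j)
    (ht_upd : ∀ j, j' ≤ j → t j = t (j - 1) ^ ((1 : ℝ) + ε))
    (hY_upd : ∀ j, j' ≤ j → Y (j + 1) = t (j - 1) ^ (-ε))
    (k : ℕ → ℕ) (hk_mono : ∀ j, j' ≤ j → k j < k (j + 1))
    (y c : ℕ → EuclideanSpace ℝ (Fin m))
    (hy_block : ∀ j, j' ≤ j → ∀ i, k j ≤ i → i < k (j + 1) → y i = y (k j))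
    (hy_bound : ∀ j, j' ≤ j → ‖y (k j)‖ ≤ Y (j + 1))
    (hc_target : ∀ j, j' ≤ j → ‖c (k j)‖ ≤ t j) :
    ∀ q : ℕ, ∑ i ∈ Finset.Ico (k j') (k (j' + q + 1)),
        (inner ℝ (y i) (c (i + 1) - c i) : ℝ) ≤ 2 * t (j' - 1) / (1 - γt) := by
  obtain ⟨hγ0, hγ1⟩ := hγt
  -- telescoping
  have tele : ∀ (g : ℕ → ℝ) (a b : ℕ), a ≤ b →
      ∑ i ∈ Finset.Ico a b, (g (i + 1) - g i) = g b - g a := by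
    intro g a b hab
    rw [Finset.sum_Ico_eq_sub _ hab, Finset.sum_range_sub g, Finset.sum_range_sub g]
    ring
  -- single block bound
  have block : ∀ j, j' ≤ j →
      ∑ i ∈ Finset.Ico (k j) (k (j + 1)), (inner ℝ (y i) (c (i + 1) - c i) : ℝ)
        ≤ 2 * t (j - 1) := by
    intro j hj
    have hle : k j ≤ k (j + 1) := (hk_mono j hj).le
    have hrw : ∑ i ∈ Finset.Ico (k j) (k (j + 1)), (inner ℝ (y i) (c (i + 1) - c i) : ℝ)
        = ∑ i ∈ Finset.Ico (k j) (k (j + 1)),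
            ((inner ℝ (y (k j)) (c (i + 1)) : ℝ) - inner ℝ (y (k j)) (c i)) := by
      refine Finset.sum_congr rfl ?_
      intro i hi
      rw [Finset.mem_Ico] at hi
      rw [hy_block j hj i hi.1 hi.2, inner_sub_right]
    rw [hrw, tele (fun i => (inner ℝ (y (k j)) (c i) : ℝ)) _ _ hle]
    have h1 : (inner ℝ (y (k j)) (c (k (j + 1))) : ℝ) - inner ℝ (y (k j)) (c (k j))
        = (inner ℝ (y (k j)) (c (k (j + 1)) - c (k j)) : ℝ) := by rw [inner_sub_right]
    rw [h1]
    have hcs : (inner ℝ (y (k j)) (c (k (j + 1)) - c (k j)) : ℝ)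
        ≤ ‖y (k j)‖ * ‖c (k (j + 1)) - c (k j)‖ := real_inner_le_norm _ _
    have hyb := hy_bound j hj
    have hY : Y (j + 1) = t (j - 1) ^ (-ε) := hY_upd j hj
    have hYpos : 0 < Y (j + 1) := by rw [hY]; exact Real.rpow_pos_of_pos (ht_pos _) _
    have hj1 : j' ≤ j + 1 := le_trans hj (Nat.le_succ j)
    have hcn : ‖c (k (j + 1)) - c (k j)‖ ≤ t (j + 1) + t j := by
      calc ‖c (k (j + 1)) - c (k j)‖ ≤ ‖c (k (j + 1))‖ + ‖c (k j)‖ := norm_sub_le _ _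
        _ ≤ t (j + 1) + t j := add_le_add (hc_target _ hj1) (hc_target _ hj)
    have htj1 : t (j + 1) ≤ t j := by
      have := ht_dec j (le_trans (Nat.sub_le j' 1) hj)
      nlinarith [ht_pos j]
    have key : (inner ℝ (y (k j)) (c (k (j + 1)) - c (k j)) : ℝ) ≤ Y (j + 1) * (2 * t j) := by
      calc (inner ℝ (y (k j)) (c (k (j + 1)) - c (k j)) : ℝ)
          ≤ ‖y (k j)‖ * ‖c (k (j + 1)) - c (k j)‖ := hcs
        _ ≤ Y (j + 1) * (t (j + 1) + t j) := by
            apply mul_le_mul hyb hcn (norm_nonneg _) hYpos.le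
        _ ≤ Y (j + 1) * (2 * t j) := by nlinarith
    refine key.trans ?_
    have ht : t j = t (j - 1) ^ ((1 : ℝ) + ε) := ht_upd j hj
    rw [hY, ht]
    have : t (j - 1) ^ (-ε) * (2 * t (j - 1) ^ ((1 : ℝ) + ε)) = 2 * t (j - 1) := by
      rw [mul_comm, mul_assoc, ← Real.rpow_add (ht_pos _), ]
      norm_num
    rw [this]
  -- geometric decay of t (j' - 1 + s)
  have decay : ∀ s : ℕ, t (j' - 1 + s) ≤ γt ^ s * t (j' - 1) := by
    intro s
    induction s with
    | zero => simp
    | succ n ih =>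
      have := ht_dec (j' - 1 + n) (Nat.le_add_right _ _)
      calc t (j' - 1 + (n + 1)) = t (j' - 1 + n + 1) := by ring_nf
        _ ≤ γt * t (j' - 1 + n) := this
        _ ≤ γt * (γt ^ n * t (j' - 1)) := by nlinarith
        _ = γt ^ (n + 1) * t (j' - 1) := by ring
  -- k monotone
  have kmono : ∀ q : ℕ, k j' ≤ k (j' + q) := by
    intro q
    induction q with
    | zero => simp
    | succ n ih => exact ih.trans (hk_mono (j' + n) (Nat.le_add_right _ _)).le
  -- main induction: sum ≤ 2 t(j'-1) * geom sum
  have main : ∀ q : ℕ, ∑ i ∈ Finset.Ico (k j') (k (j' + q + 1)),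
      (inner ℝ (y i) (c (i + 1) - c i) : ℝ)
        ≤ 2 * t (j' - 1) * ∑ s ∈ Finset.range (q + 1), γt ^ s := by
    intro q
    induction q with
    | zero =>
      simpa using block j' le_rfl
    | succ n ih =>
      have h1 : k j' ≤ k (j' + n + 1) := by
        have := kmono (n + 1); rwa [← Nat.add_assoc] at this
      have h2 : k (j' + n + 1) ≤ k (j' + n + 1 + 1) :=
        (hk_mono (j' + n + 1) (by omega)).le
      have hsplit := Finset.sum_Ico_consecutive
        (f := fun i => (inner ℝ (y i) (c (i + 1) - c i) : ℝ)) h1 h2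
      have heq : j' + (n + 1) + 1 = j' + n + 1 + 1 := by omega
      rw [heq, ← hsplit]
      have hb := block (j' + n + 1) (by omega)
      have hidx : j' + n + 1 - 1 = j' - 1 + (n + 1) := by omega
      have hb2 : ∑ i ∈ Finset.Ico (k (j' + n + 1)) (k (j' + n + 1 + 1)),
          (inner ℝ (y i) (c (i + 1) - c i) : ℝ) ≤ 2 * t (j' - 1) * γt ^ (n + 1) := by
        refine hb.trans ?_
        rw [hidx]
        have := decay (n + 1)
        nlinarith
      calc _ ≤ 2 * t (j' - 1) * ∑ s ∈ Finset.range (n + 1), γt ^ s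
              + 2 * t (j' - 1) * γt ^ (n + 1) := add_le_add ih hb2
        _ = 2 * t (j' - 1) * ∑ s ∈ Finset.range (n + 1 + 1), γt ^ s := by
            rw [Finset.sum_range_succ (fun s => γt ^ s) (n + 1)]; ring
  intro q
  refine (main q).trans ?_
  have hgeom : ∑ s ∈ Finset.range (q + 1), γt ^ s ≤ 1 / (1 - γt) := by
    have hgs := geom_sum_eq (by linarith : γt ≠ 1) (q + 1)
    have e : (γt ^ (q + 1) - 1) / (γt - 1) = (1 - γt ^ (q + 1)) / (1 - γt) := by
      rw [← neg_div_neg_eq]; congr 1 <;> ring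
    rw [hgs, e, div_le_div_iff₀ (by linarith) (by linarith)]
    have hpow : 0 ≤ γt ^ (q + 1) := pow_nonneg hγ0.le _
    nlinarith
  have ht0 : 0 ≤ 2 * t (j' - 1) := by linarith [ht_pos (j' - 1)]
  calc 2 * t (j' - 1) * ∑ s ∈ Finset.range (q + 1), γt ^ s
      ≤ 2 * t (j' - 1) * (1 / (1 - γt)) := by
        exact mul_le_mul_of_nonneg_left hgeom ht0
    _ = 2 * t (j' - 1) / (1 - γt) := by ring
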